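/- Let Y = {y_0, …, y_m} ⊆ R^d. A point x in the convex hull P of Y lies on the boundary of P if and only if x has a unique representation as a convex combination x = Σ w_i y_i (w_i ≥ 0, Σ w_i = 1) and this representation has at most d nonzero coefficients, assuming Y is in general position. -/

import Mathlib

open Finset in
lemma mem_convexHull_range_iff' {n : ℕ} {E : Type*} [AddCommGroup E] [Module ℝ E]
    (y : Fin n → E) (x : E) :
    x ∈ convexHull ℝ (Set.range y) ↔
      ∃ w : Fin n → ℝ, (∀ i, 0 ≤ w i) ∧ (∑ i, w i) = 1 ∧ (∑ i, w i • y i) = x := by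
  classical
  rw [convexHull_range_eq_exists_affineCombination]
  constructor
  · rintro ⟨s, w, h0, h1, hc⟩
    refine ⟨fun i => if i ∈ s then w i else 0, fun i => ?_, ?_, ?_⟩
    · simp only []
      split
      · exact h0 i ‹_›
      · exact le_refl 0
    · simp only []
      rw [Finset.sum_ite_mem, Finset.univ_inter]; exact h1
    · rw [Finset.affineCombination_eq_linear_combination s y w h1] at hc
      rw [← hc]
      simp only [ite_smul, zero_smul]
      rw [Finset.sum_ite_mem, Finset.univ_inter]
  · rintro ⟨w, h0, h1, hc⟩
    exact ⟨Finset.univ, w, fun i _ => h0 i, h1,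
      by rw [Finset.affineCombination_eq_linear_combination _ _ _ h1]; exact hc⟩

open Classical in
theorem stmt_12 {d m : ℕ} (y : Fin (m + 1) → EuclideanSpace ℝ (Fin d))
    (hinj : Function.Injective y)
    (hgp : ∀ s : Finset (Fin (m + 1)), s.card ≤ d + 1 →
      AffineIndependent ℝ (fun i : s => y i))
    (hfull : affineSpan ℝ (Set.range y) = ⊤)
    (x : EuclideanSpace ℝ (Fin d)) (hx : x ∈ convexHull ℝ (Set.range y)) :
    x ∈ frontier (convexHull ℝ (Set.range y)) ↔
      ∃ w : Fin (m + 1) → ℝ, (∀ i, 0 ≤ w i) ∧ (∑ i, w i) = 1 ∧ (∑ i, w i • y i) = x ∧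
        (Finset.univ.filter fun i => w i ≠ 0).card ≤ d ∧
        ∀ w' : Fin (m + 1) → ℝ, (∀ i, 0 ≤ w' i) → (∑ i, w' i) = 1 →
          (∑ i, w' i • y i) = x → w' = w := by
  classical
  set C := convexHull ℝ (Set.range y) with hC
  have hconv : Convex ℝ C := convex_convexHull ℝ _
  have hclosed : IsClosed C := (Set.finite_range y).isClosed_convexHull ℝ
  have hyC : ∀ i, y i ∈ C := fun i => subset_convexHull ℝ _ ⟨i, rfl⟩
  have hspan : affineSpan ℝ C = ⊤ := by
    rw [hC, affineSpan_convexHull]; exact hfull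
  have hint : (interior C).Nonempty := hconv.interior_nonempty_iff_affineSpan_eq_top.mpr hspan
  have hfrEq : frontier C = C \ interior C := hclosed.frontier_eq
  constructor
  · intro hfr
    rw [hfrEq] at hfr
    have hxnotint : x ∉ interior C := hfr.2
    obtain ⟨f, hf⟩ := geometric_hahn_banach_open_point hconv.interior isOpen_interior hxnotint
    obtain ⟨a, ha⟩ := hint
    have hfa : f a < f x := hf a ha
    -- f (y i) ≤ f x for all i
    have hfy : ∀ i, f (y i) ≤ f x := by
      intro i
      by_contra h
      push_neg at h
      have hca : f a < f (y i) := lt_trans hfa h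
      set t : ℝ := ((f x - f a) + (f (y i) - f a)) / (2 * (f (y i) - f a)) with hts
      have hd : 0 < f (y i) - f a := by linarith
      have ht0 : 0 < t := by
        apply div_pos (by linarith) (by linarith)
      have ht1 : t < 1 := by
        rw [div_lt_one (by linarith)]
        linarith
      have hmem : (1 - t) • a + t • y i ∈ interior C :=
        hconv.combo_interior_closure_mem_interior ha (subset_closure (hyC i))
          (by linarith) (le_of_lt ht0) (by ring)
      have hlt := hf _ hmem
      rw [map_add, map_smul, map_smul, smul_eq_mul, smul_eq_mul] at hlt
      have htd : t * (f (y i) - f a) = ((f x - f a) + (f (y i) - f a)) / 2 := by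
        rw [hts]; field_simp
      nlinarith
    set T : Finset (Fin (m+1)) := Finset.univ.filter (fun i => f (y i) = f x) with hT
    have hTcard : T.card ≤ d := by
      by_contra hcon
      push_neg at hcon
      obtain ⟨T', hT'sub, hT'card⟩ := Finset.exists_subset_card_eq (s := T) (n := d+1) hcon
      have hai := hgp T' (le_of_eq hT'card)
      have hcardT' : Fintype.card ↥T' = d + 1 := by rw [Fintype.card_coe]; exact hT'card
      have hrank : Module.finrank ℝ (vectorSpan ℝ (Set.range fun i : ↥T' => y ↑i)) = d :=
        hai.finrank_vectorSpan hcardT'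
      have hz : ∃ z, f z ≠ 0 := by
        by_contra hz
        push_neg at hz
        rw [hz a, hz x] at hfa
        exact lt_irrefl 0 hfa
      obtain ⟨z, hz⟩ := hz
      have hsurj : Function.Surjective f := by
        intro r
        exact ⟨(r / f z) • z, by rw [map_smul, smul_eq_mul, div_mul_cancel₀ _ hz]⟩
      have hrange : LinearMap.range (f : EuclideanSpace ℝ (Fin d) →ₗ[ℝ] ℝ) = ⊤ :=
        LinearMap.range_eq_top.mpr hsurj
      have hrk := LinearMap.finrank_range_add_finrank_ker
        (f : EuclideanSpace ℝ (Fin d) →ₗ[ℝ] ℝ)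
      rw [hrange, finrank_top] at hrk
      have hker : vectorSpan ℝ (Set.range fun i : ↥T' => y ↑i) ≤
          LinearMap.ker (f : EuclideanSpace ℝ (Fin d) →ₗ[ℝ] ℝ) := by
        rw [vectorSpan_def, Submodule.span_le]
        rintro v hv
        rw [Set.mem_vsub] at hv
        obtain ⟨p, hp, q, hq, rfl⟩ := hv
        obtain ⟨⟨i, hi⟩, rfl⟩ := hp
        obtain ⟨⟨k, hk⟩, rfl⟩ := hq
        have hfi : f (y i) = f x := (Finset.mem_filter.mp (hT'sub hi)).2
        have hfk : f (y k) = f x := (Finset.mem_filter.mp (hT'sub hk)).2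
        simp only [SetLike.mem_coe, LinearMap.mem_ker, vsub_eq_sub,
          ContinuousLinearMap.coe_coe, map_sub, hfi, hfk, sub_self]
      have hmono := Submodule.finrank_mono hker
      rw [hrank] at hmono
      have hE : Module.finrank ℝ (EuclideanSpace ℝ (Fin d)) = d := by simp
      have hR : Module.finrank ℝ ℝ = 1 := Module.finrank_self ℝ
      omega
    have hsupp : ∀ w : Fin (m+1) → ℝ, (∀ i, 0 ≤ w i) → (∑ i, w i) = 1 →
        (∑ i, w i • y i) = x → ∀ i, w i ≠ 0 → i ∈ T := by
      intro w hpos hsum hcomb i hi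
      have hzero : ∑ k, w k * (f x - f (y k)) = 0 := by
        have : ∑ k, w k * (f x - f (y k)) = (∑ k, w k) * f x - f (∑ k, w k • y k) := by
          rw [map_sum, Finset.sum_mul, ← Finset.sum_sub_distrib]
          apply Finset.sum_congr rfl
          intro k _
          rw [map_smul, smul_eq_mul]
          ring
        rw [this, hsum, hcomb]
        ring
      have hnn : ∀ k ∈ Finset.univ, 0 ≤ w k * (f x - f (y k)) := fun k _ =>
        mul_nonneg (hpos k) (by linarith [hfy k])
      have h0 := (Finset.sum_eq_zero_iff_of_nonneg hnn).mp hzero i (Finset.mem_univ i)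
      rcases mul_eq_zero.mp h0 with h | h
      · exact absurd h hi
      · simp only [hT, Finset.mem_filter, Finset.mem_univ, true_and]
        linarith
    obtain ⟨w0, h0pos, h0sum, h0x⟩ := (mem_convexHull_range_iff' y x).mp hx
    have hTai := hgp T (le_trans hTcard (Nat.le_succ d))
    have key : ∀ w' : Fin (m+1) → ℝ, (∀ i, 0 ≤ w' i) → (∑ i, w' i) = 1 →
        (∑ i, w' i • y i) = x → w' = w0 := by
      intro w' hpos' hsum' hx'
      have hs0 : ∀ i, i ∉ T → w0 i = 0 := fun i hi => by
        by_contra hne; exact hi (hsupp w0 h0pos h0sum h0x i hne)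
      have hs' : ∀ i, i ∉ T → w' i = 0 := fun i hi => by
        by_contra hne; exact hi (hsupp w' hpos' hsum' hx' i hne)
      have e1 : ∑ i ∈ T, w' i = ∑ i ∈ T, w0 i := by
        rw [Finset.sum_subset (Finset.subset_univ T) (fun i _ hi => hs' i hi),
            Finset.sum_subset (Finset.subset_univ T) (fun i _ hi => hs0 i hi), hsum', h0sum]
      have e2 : ∑ i ∈ T, w' i • y i = ∑ i ∈ T, w0 i • y i := by
        rw [Finset.sum_subset (Finset.subset_univ T)
              (fun i _ hi => by rw [hs' i hi, zero_smul]),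
            Finset.sum_subset (Finset.subset_univ T)
              (fun i _ hi => by rw [hs0 i hi, zero_smul]), hx', h0x]
      have e1' : ∑ i ∈ (Finset.univ : Finset ↥T), w' ↑i
          = ∑ i ∈ (Finset.univ : Finset ↥T), w0 ↑i := by
        rw [Finset.sum_coe_sort T w', Finset.sum_coe_sort T w0]
        exact e1
      have e2' : ∑ i ∈ (Finset.univ : Finset ↥T), w' ↑i • y ↑i
          = ∑ i ∈ (Finset.univ : Finset ↥T), w0 ↑i • y ↑i := by
        rw [Finset.sum_coe_sort T (fun i => w' i • y i),
            Finset.sum_coe_sort T (fun i => w0 i • y i)]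
        exact e2
      have hall := hTai.eq_of_sum_eq_sum e1' e2'
      funext i
      by_cases hiT : i ∈ T
      · exact hall ⟨i, hiT⟩ (Finset.mem_univ _)
      · rw [hs' i hiT, hs0 i hiT]
    have hw0card : (Finset.univ.filter fun i => w0 i ≠ 0).card ≤ d := by
      refine le_trans (Finset.card_le_card ?_) hTcard
      intro i hi
      rw [Finset.mem_filter] at hi
      exact hsupp w0 h0pos h0sum h0x i hi.2
    exact ⟨w0, h0pos, h0sum, h0x, hw0card, key⟩
  · rintro ⟨w, hwpos, hwsum, hwx, hwcard, hwuniq⟩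
    rw [hfrEq]
    refine ⟨hx, fun hxint => ?_⟩
    set S := Finset.univ.filter (fun i => w i ≠ 0) with hS
    have hScard : S.card ≤ d := hwcard
    have hSsum : ∑ i ∈ S, w i = 1 := by
      rw [← hwsum]
      apply Finset.sum_subset (Finset.subset_univ _)
      intro i _ hi
      simp only [hS, Finset.mem_filter, Finset.mem_univ, true_and, not_not] at hi
      exact hi
    have hSne : S.Nonempty := by
      rcases Finset.eq_empty_or_nonempty S with h | h
      · rw [h] at hSsum; simp at hSsum
      · exact h
    set A := affineSpan ℝ (y '' ↑S) with hA
    have hAne : ∃ j, y j ∉ A := by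
      by_contra h
      push_neg at h
      have htop : A = ⊤ := by
        apply le_antisymm le_top
        rw [← hfull]
        apply affineSpan_le.mpr
        rintro p ⟨j, rfl⟩
        exact h j
      have hSpos := Finset.card_pos.mpr hSne
      have h1 : Fintype.card ↥S = (S.card - 1) + 1 := by
        rw [Fintype.card_coe]
        omega
      have h2 : Module.finrank ℝ (vectorSpan ℝ (Set.range fun i : ↥S => y ↑i)) ≤ S.card - 1 :=
        finrank_vectorSpan_range_le ℝ _ h1
      have h3 : (Set.range fun i : ↥S => y ↑i) = y '' ↑S := by
        ext p; simp [Set.mem_image]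
      have h4 : vectorSpan ℝ (y '' ↑S) = ⊤ := by
        have := congrArg AffineSubspace.direction htop
        rwa [hA, direction_affineSpan, AffineSubspace.direction_top] at this
      rw [h3, h4] at h2
      have h5 : Module.finrank ℝ (⊤ : Submodule ℝ (EuclideanSpace ℝ (Fin d))) = d := by
        rw [finrank_top]
        simp
      rw [h5] at h2
      omega
    obtain ⟨j, hj⟩ := hAne
    obtain ⟨ε, hε, hball⟩ := Metric.isOpen_iff.mp isOpen_interior x hxint
    set t : ℝ := ε / (2 * (‖x - y j‖ + 1)) with hts
    have hn0 : (0:ℝ) ≤ ‖x - y j‖ := norm_nonneg _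
    have ht : 0 < t := div_pos hε (by positivity)
    have h1t : (0:ℝ) < 1 + t := by linarith
    set x' := x + t • (x - y j) with hx'
    have hx'C : x' ∈ C := by
      apply interior_subset
      apply hball
      rw [Metric.mem_ball, dist_eq_norm]
      have hxx : x' - x = t • (x - y j) := by rw [hx']; abel
      rw [hxx, norm_smul, Real.norm_eq_abs, abs_of_pos ht]
      rw [hts]
      rw [div_mul_eq_mul_div, div_lt_iff₀ (by positivity)]
      nlinarith
    obtain ⟨v, hvpos, hvsum, hvx⟩ := (mem_convexHull_range_iff' y x').mp hx'C
    set w' : Fin (m+1) → ℝ := fun i => (1/(1+t)) * v i + (t/(1+t)) * (if i = j then 1 else 0)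
      with hw'
    have hw'pos : ∀ i, 0 ≤ w' i := by
      intro i
      apply add_nonneg
      · exact mul_nonneg (by positivity) (hvpos i)
      · apply mul_nonneg (by positivity)
        split <;> norm_num
    have hw'sum : ∑ i, w' i = 1 := by
      simp only [hw', Finset.sum_add_distrib, ← Finset.mul_sum, hvsum]
      rw [Finset.sum_ite_eq' Finset.univ j (fun _ => (1:ℝ))]
      simp only [Finset.mem_univ, if_true, mul_one]
      field_simp
    have hw'x : ∑ i, w' i • y i = x := by
      have key : ∑ i, w' i • y i = (1/(1+t)) • x' + (t/(1+t)) • y j := by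
        simp only [hw', add_smul, mul_smul, Finset.sum_add_distrib, ← Finset.smul_sum, hvx]
        congr 1
        congr 1
        simp only [ite_smul, one_smul, zero_smul]
        rw [Finset.sum_ite_eq' Finset.univ j y]
        simp
      rw [key, hx']
      have hne : (1+t) ≠ 0 := ne_of_gt h1t
      match_scalars <;> field_simp <;> ring
    have heq := hwuniq w' hw'pos hw'sum hw'x
    have hwj : w j ≠ 0 := by
      rw [← heq]
      have : w' j = (1/(1+t)) * v j + (t/(1+t)) := by simp [hw']
      rw [this]
      have hv0 : 0 ≤ (1/(1+t)) * v j := mul_nonneg (by positivity) (hvpos j)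
      have : 0 < t/(1+t) := div_pos ht h1t
      positivity
    have hjS : j ∈ S := by simp [hS, hwj]
    exact hj (subset_affineSpan ℝ _ ⟨j, hjS, rfl⟩)
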